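/- Suppose the linear program min c^T x subject to Ax ≥ b (with A ∈ Q^{m×n}, b ∈ Q^m, c ∈ Q^n) is feasible and has optimal value v ∈ Q. Then there exists d ∈ Q^m with d ≥ 0 such that d^T A = c^T and d^T b = v, i.e., the bound c^T x ≥ v can be inferred as a suitable linear combination of the constraints. -/

import Mathlib

open Matrix

lemma farkas_cone : ∀ (m : ℕ) {k : ℕ} (a : Fin m → (Fin k → ℚ)) (c : Fin k → ℚ),
    (∀ y : Fin k → ℚ, (∀ i, 0 ≤ a i ⬝ᵥ y) → 0 ≤ c ⬝ᵥ y) →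
    ∃ d : Fin m → ℚ, (∀ i, 0 ≤ d i) ∧ ∑ i, d i • a i = c := by
  intro m
  induction m with
  | zero =>
    intro k a c h
    have h1 : 0 ≤ c ⬝ᵥ (-c) := h (-c) (fun i => absurd i.2 (by omega))
    have h2 : c ⬝ᵥ (-c) = -(c ⬝ᵥ c) := by simp
    have hnn : 0 ≤ c ⬝ᵥ c := Finset.sum_nonneg fun i _ => mul_self_nonneg _
    have h3 : c ⬝ᵥ c = 0 := le_antisymm (by linarith) hnn
    have hc : c = 0 := dotProduct_self_eq_zero.mp h3
    exact ⟨0, fun i => le_refl 0, by simp [hc]⟩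
  | succ m ih =>
    intro k a c h
    set α := a 0 with hα
    set a' : Fin m → (Fin k → ℚ) := fun i => a i.succ with ha'
    by_cases hcase : ∀ y : Fin k → ℚ, (∀ i, 0 ≤ a' i ⬝ᵥ y) → 0 ≤ c ⬝ᵥ y
    · obtain ⟨d', hd'0, hd's⟩ := ih a' c hcase
      refine ⟨Fin.cons 0 d', fun i => ?_, ?_⟩
      · refine Fin.cases ?_ ?_ i <;> simp [hd'0]
      · rw [Fin.sum_univ_succ]
        simpa using hd's
    · push_neg at hcase
      obtain ⟨y0, hy0a, hy0c⟩ := hcase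
      have hαy0 : α ⬝ᵥ y0 < 0 := by
        by_contra hge
        push_neg at hge
        have := h y0 (fun i => Fin.cases hge hy0a i)
        linarith
      have hαy0' : α ⬝ᵥ y0 ≠ 0 := ne_of_lt hαy0
      set r : (Fin k → ℚ) → (Fin k → ℚ) := fun w => w - (w ⬝ᵥ y0 / (α ⬝ᵥ y0)) • α with hr
      have key : ∀ w y : Fin k → ℚ, (r w) ⬝ᵥ y = w ⬝ᵥ y - (w ⬝ᵥ y0) * (α ⬝ᵥ y) / (α ⬝ᵥ y0) := by
        intro w y
        simp only [hr, sub_dotProduct, smul_dotProduct, smul_eq_mul]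
        ring
      have hyp' : ∀ y : Fin k → ℚ, (∀ i, 0 ≤ (r (a' i)) ⬝ᵥ y) → 0 ≤ (r c) ⬝ᵥ y := by
        intro y hy
        set y' : Fin k → ℚ := y - (α ⬝ᵥ y / (α ⬝ᵥ y0)) • y0 with hy'
        have dotswap : ∀ w : Fin k → ℚ, w ⬝ᵥ y' = (r w) ⬝ᵥ y := by
          intro w
          rw [key]
          simp only [hy', dotProduct_sub, dotProduct_smul, smul_eq_mul]
          ring
        have hfeas : ∀ i : Fin (m+1), 0 ≤ a i ⬝ᵥ y' := by
          intro i
          refine Fin.cases ?_ (fun j => ?_) i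
          · rw [dotswap, key]
            field_simp
            rw [← hα, mul_comm (α ⬝ᵥ y)]
            simp
          · rw [dotswap]
            exact hy j
        have := h y' hfeas
        rwa [dotswap] at this
      obtain ⟨d', hd'0, hd's⟩ := ih (fun i => r (a' i)) (r c) hyp'
      set S : ℚ := (∑ i, d' i * (a' i ⬝ᵥ y0)) / (α ⬝ᵥ y0) with hS
      set μ : ℚ := c ⬝ᵥ y0 / (α ⬝ᵥ y0) - S with hμ
      have hμpos : 0 ≤ μ := by
        have hnum : c ⬝ᵥ y0 - ∑ i, d' i * (a' i ⬝ᵥ y0) < 0 := by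
          have : 0 ≤ ∑ i, d' i * (a' i ⬝ᵥ y0) :=
            Finset.sum_nonneg fun i _ => mul_nonneg (hd'0 i) (hy0a i)
          linarith
        have : 0 < (c ⬝ᵥ y0 - ∑ i, d' i * (a' i ⬝ᵥ y0)) / (α ⬝ᵥ y0) :=
          div_pos_of_neg_of_neg hnum hαy0
        rw [hμ, hS]
        rw [sub_div] at this
        linarith
      have expand : ∑ i, d' i • (r (a' i)) = (∑ i, d' i • a' i) - S • α := by
        rw [hS, Finset.sum_div, Finset.sum_smul, ← Finset.sum_sub_distrib]
        congr 1 with i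
        rw [hr]
        simp only [smul_sub, smul_smul]
        rw [mul_div_assoc]
      have hsum : ∑ i, d' i • a' i = c - μ • α := by
        have h1 : (∑ i, d' i • a' i) - S • α = c - (c ⬝ᵥ y0 / (α ⬝ᵥ y0)) • α := by
          rw [← expand, hd's, hr]
        rw [hμ, sub_smul]
        have := sub_eq_iff_eq_add.mp h1
        rw [this]
        abel
      refine ⟨Fin.cons μ d', fun i => ?_, ?_⟩
      · refine Fin.cases ?_ ?_ i <;> simp [hμpos, hd'0]
      · rw [Fin.sum_univ_succ]
        simp only [Fin.cons_zero, Fin.cons_succ]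
        show μ • α + ∑ i, d' i • a' i = c
        rw [hsum]
        abel

lemma snoc_dot {n : ℕ} (u : Fin n → ℚ) (β : ℚ) (y : Fin (n+1) → ℚ) :
    (Fin.snoc u β : Fin (n+1) → ℚ) ⬝ᵥ y
      = u ⬝ᵥ (fun j => y j.castSucc) + β * y (Fin.last n) := by
  simp [dotProduct, Fin.sum_univ_castSucc]

theorem rational_lp_duality {n m : ℕ} (A : Matrix (Fin m) (Fin n) ℚ) (b : Fin m → ℚ)
    (c : Fin n → ℚ) (v : ℚ)
    (hopt : IsLeast {w : ℝ | ∃ x : Fin n → ℝ,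
        (∀ i, (b i : ℝ) ≤ (A.map (fun q : ℚ => (q : ℝ))).mulVec x i) ∧
        w = (fun j => (c j : ℝ)) ⬝ᵥ x} (v : ℝ)) :
    ∃ d : Fin m → ℚ, 0 ≤ d ∧ A.vecMul d = c ∧ d ⬝ᵥ b = v := by
  classical
  set f : ℚ →+* ℝ := Rat.castHom ℝ with hf
  set AR := A.map (fun q : ℚ => (q : ℝ)) with hAR
  set cR : Fin n → ℝ := fun j => (c j : ℝ) with hcR
  obtain ⟨⟨x0, hx0f, hx0v⟩, hlb⟩ := hopt
  -- the vectors for Farkas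
  set e : Fin (n+1) → ℚ := Fin.snoc (0 : Fin n → ℚ) 1 with he
  set row : Fin m → (Fin (n+1) → ℚ) := fun i => Fin.snoc (fun j => A i j) (-(b i)) with hrow
  set t : Fin (n+1) → ℚ := Fin.snoc c (-v) with ht
  have hyp : ∀ y : Fin (n+1) → ℚ,
      (∀ i : Fin (m+1), 0 ≤ (Fin.cons e row : Fin (m+1) → _) i ⬝ᵥ y) → 0 ≤ t ⬝ᵥ y := by
    intro y hy
    set x' : Fin n → ℚ := fun j => y j.castSucc with hx'
    set s : ℚ := y (Fin.last n) with hs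
    have hs0 : 0 ≤ s := by
      have := hy 0
      rw [Fin.cons_zero, he, snoc_dot] at this
      simpa using this
    have hrows : ∀ i : Fin m, b i * s ≤ (fun j => A i j) ⬝ᵥ x' := by
      intro i
      have := hy i.succ
      rw [Fin.cons_succ, hrow, snoc_dot] at this
      have h' : 0 ≤ (fun j => A i j) ⬝ᵥ x' + -b i * s := this
      linarith
    rw [ht, snoc_dot]
    show 0 ≤ c ⬝ᵥ x' + (-v) * s
    rcases eq_or_lt_of_le hs0 with hseq | hspos
    · -- s = 0 : unbounded direction argument
      have hAx' : ∀ i : Fin m, 0 ≤ (fun j => A i j) ⬝ᵥ x' := by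
        intro i; have := hrows i; rw [← hseq] at this; linarith
      by_contra hneg
      push_neg at hneg
      rw [← hseq, mul_zero, add_zero] at hneg
      have hcx' : c ⬝ᵥ x' < 0 := hneg
      set z : Fin n → ℝ := x0 + fun j => ((x' j : ℚ) : ℝ) with hz
      have hzfeas : ∀ i, (b i : ℝ) ≤ AR.mulVec z i := by
        intro i
        rw [hz, Matrix.mulVec_add]
        have h2 : AR.mulVec (fun j => ((x' j : ℚ) : ℝ)) i = (((fun j => A i j) ⬝ᵥ x' : ℚ) : ℝ) := by
          rw [show ((((fun j => A i j) ⬝ᵥ x' : ℚ) : ℝ)) = f ((fun j => A i j) ⬝ᵥ x') from rfl,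
            RingHom.map_dotProduct]
          rfl
        have h3 : (0:ℝ) ≤ AR.mulVec (fun j => ((x' j : ℚ) : ℝ)) i := by
          rw [h2]; exact_mod_cast hAx' i
        have := hx0f i
        simp only [Pi.add_apply]
        linarith
      have hmem : cR ⬝ᵥ z ∈ {w : ℝ | ∃ x : Fin n → ℝ,
          (∀ i, (b i : ℝ) ≤ AR.mulVec x i) ∧ w = cR ⬝ᵥ x} := ⟨z, hzfeas, rfl⟩
      have hge := hlb hmem
      have hcz : cR ⬝ᵥ z = cR ⬝ᵥ x0 + ((c ⬝ᵥ x' : ℚ) : ℝ) := by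
        rw [hz, dotProduct_add]
        congr 1
        rw [show (((c ⬝ᵥ x' : ℚ) : ℝ)) = f (c ⬝ᵥ x') from rfl, RingHom.map_dotProduct]
        rfl
      rw [hcz, ← hx0v] at hge
      have : ((c ⬝ᵥ x' : ℚ) : ℝ) < 0 := by exact_mod_cast hcx'
      linarith
    · -- s > 0 : rescale to a feasible rational point
      set x : Fin n → ℚ := s⁻¹ • x' with hx
      have hxfeas : ∀ i : Fin m, b i ≤ (fun j => A i j) ⬝ᵥ x := by
        intro i
        rw [hx, dotProduct_smul, smul_eq_mul]
        rw [← mul_le_mul_iff_right₀ hspos, ← mul_assoc, mul_inv_cancel₀ (ne_of_gt hspos), one_mul]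
        have := hrows i
        linarith
      have hxRfeas : ∀ i, (b i : ℝ) ≤ AR.mulVec (fun j => ((x j : ℚ) : ℝ)) i := by
        intro i
        have h2 : AR.mulVec (fun j => ((x j : ℚ) : ℝ)) i = (((fun j => A i j) ⬝ᵥ x : ℚ) : ℝ) := by
          rw [show ((((fun j => A i j) ⬝ᵥ x : ℚ) : ℝ)) = f ((fun j => A i j) ⬝ᵥ x) from rfl,
            RingHom.map_dotProduct]
          rfl
        rw [h2]
        exact_mod_cast hxfeas i
      have hmem : cR ⬝ᵥ (fun j => ((x j : ℚ) : ℝ)) ∈ {w : ℝ | ∃ xx : Fin n → ℝ,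
          (∀ i, (b i : ℝ) ≤ AR.mulVec xx i) ∧ w = cR ⬝ᵥ xx} := ⟨_, hxRfeas, rfl⟩
      have hge := hlb hmem
      have hcx : cR ⬝ᵥ (fun j => ((x j : ℚ) : ℝ)) = ((c ⬝ᵥ x : ℚ) : ℝ) := by
        rw [show (((c ⬝ᵥ x : ℚ) : ℝ)) = f (c ⬝ᵥ x) from rfl, RingHom.map_dotProduct]
        rfl
      rw [hcx] at hge
      have hvq : v ≤ c ⬝ᵥ x := by exact_mod_cast hge
      have hcxx' : c ⬝ᵥ x' = s * (c ⬝ᵥ x) := by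
        rw [hx, dotProduct_smul, smul_eq_mul]
        field_simp
      rw [hcxx']
      nlinarith
  obtain ⟨dd, hdd0, hdds⟩ := farkas_cone (m+1) (Fin.cons e row) t hyp
  set d : Fin m → ℚ := fun i => dd i.succ with hd
  set μ : ℚ := dd 0 with hμ
  rw [Fin.sum_univ_succ] at hdds
  simp only [Fin.cons_zero, Fin.cons_succ] at hdds
  -- coordinates
  have hcoord : ∀ j : Fin (n+1), μ * e j + ∑ i, d i * row i j = t j := by
    intro j
    have := congr_fun hdds j
    simpa [Finset.sum_apply] using this
  have hvecmul : A.vecMul d = c := by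
    funext j
    have := hcoord j.castSucc
    rw [he, ht, hrow] at this
    simp only [Fin.snoc_castSucc, Pi.zero_apply, mul_zero, zero_add] at this
    rw [Matrix.vecMul, dotProduct]
    rw [← this]
  have hlast : μ + ∑ i, d i * (-(b i)) = -v := by
    have := hcoord (Fin.last n)
    rw [he, ht, hrow] at this
    simpa using this
  have hdb : d ⬝ᵥ b = v + μ := by
    rw [dotProduct]
    have : ∑ i, d i * (-(b i)) = -(∑ i, d i * b i) := by
      rw [← Finset.sum_neg_distrib]; congr 1 with i; ring
    rw [this] at hlast
    linarith
  -- weak duality to force μ = 0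
  have hweak : (d ⬝ᵥ b : ℚ) ≤ v := by
    have hstep : ((d ⬝ᵥ b : ℚ) : ℝ) ≤ (fun i => (d i : ℝ)) ⬝ᵥ AR.mulVec x0 := by
      rw [show (((d ⬝ᵥ b : ℚ)) : ℝ) = f (d ⬝ᵥ b) from rfl, RingHom.map_dotProduct]
      apply Finset.sum_le_sum
      intro i _
      have hdi : (0:ℝ) ≤ (d i : ℝ) := by exact_mod_cast hdd0 i.succ
      exact mul_le_mul_of_nonneg_left (hx0f i) hdi
    rw [Matrix.dotProduct_mulVec] at hstep
    have hvm : (fun i => (d i : ℝ)) ᵥ* AR = cR := by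
      funext j
      rw [show (fun i => (d i : ℝ)) = f ∘ d from rfl, hAR,
        show A.map (fun q : ℚ => (q : ℝ)) = A.map f from rfl, ← RingHom.map_vecMul]
      rw [show d ᵥ* A = A.vecMul d from rfl, hvecmul]
      rfl
    rw [hvm, ← hx0v] at hstep
    exact_mod_cast hstep
  have hμ0 : 0 ≤ μ := hdd0 0
  refine ⟨d, ?_, hvecmul, ?_⟩
  · intro i; exact hdd0 i.succ
  · rw [hdb] at hweak ⊢
    linarith
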